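/- Assume ⟨Au, u⟩_Y ≥ 0 for all u ∈ X. If u ∈ X and u_h ∈ X_h satisfy the Galerkin orthogonality b(u − u_h, z_h) = 0 for all z_h ∈ Y_h, then the Galerkin projection is bounded: ‖u_h‖_{X_h} ≤ 2 · ‖u‖_X. -/

import Mathlib

/-- Boundedness of the Galerkin projection: under `⟪Au, u⟫_Y ≥ 0` on `X`, if `u ∈ X` and
`u_h ∈ X_h` satisfy the Galerkin orthogonality `b(u - u_h, z_h) = 0` for all `z_h ∈ Y_h`,
then `‖u_h‖_{X_h} ≤ 2 ‖u‖_X`.  Here `b(w,z) = ⟪w + Aw, z⟫_Y`, `A_h w := P_h (A w)` with the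
orthogonal projection `P_h` onto the closed subspace `Y_h`,
`‖w‖_{X_h} = √(‖w‖_Y² + ‖A_h w‖_Y²)` and `‖w‖_X = √(‖w‖_Y² + ‖Aw‖_Y²)`. -/
theorem spacetime_galerkin_projection_bounded
    {Y : Type*} [NormedAddCommGroup Y] [InnerProductSpace ℝ Y] [CompleteSpace Y]
    (X : Submodule ℝ Y) (A : X →ₗ[ℝ] Y)
    (Yh : Submodule ℝ Y) [Submodule.HasOrthogonalProjection Yh]
    (Xh : Submodule ℝ Y) (hXhX : Xh ≤ X) (hXhY : Xh ≤ Yh)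
    (hpos : ∀ w : X, 0 ≤ (inner ℝ (A w) (w : Y) : ℝ))
    (u : X) (uh : Y) (huh : uh ∈ Xh)
    (hGal : ∀ zh ∈ Yh,
      (inner ℝ (((u - ⟨uh, hXhX huh⟩ : X) : Y) + A (u - ⟨uh, hXhX huh⟩)) zh : ℝ) = 0) :
    Real.sqrt (‖uh‖ ^ 2 + ‖(Submodule.orthogonalProjectionOnto Yh (A ⟨uh, hXhX huh⟩) : Y)‖ ^ 2) ≤
      2 * Real.sqrt (‖(u : Y)‖ ^ 2 + ‖A u‖ ^ 2) := by
  set uhX : X := ⟨uh, hXhX huh⟩ with huhX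
  set Av : Y := A uhX with hAv
  set p : Y := (Submodule.orthogonalProjectionOnto Yh Av : Y) with hp
  have hpYh : p ∈ Yh := (Submodule.orthogonalProjectionOnto Yh Av).2
  have hvYh : uh ∈ Yh := hXhY huh
  -- Av - p is orthogonal to Yh
  have horth : ∀ w ∈ Yh, (inner ℝ Av w : ℝ) = inner ℝ p w := by
    intro w hw
    have h := Submodule.sub_starProjection_mem_orthogonal (K := Yh) Av
    have h2 : (inner ℝ w (Av - p) : ℝ) = 0 := (Submodule.mem_orthogonal Yh _).mp h w hw
    rw [inner_sub_right] at h2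
    have h3 := sub_eq_zero.mp h2
    calc (inner ℝ Av w : ℝ) = inner ℝ w Av := real_inner_comm _ _
      _ = inner ℝ w p := h3
      _ = inner ℝ p w := real_inner_comm _ _
  have hzhYh : uh + p ∈ Yh := Yh.add_mem hvYh hpYh
  -- Galerkin orthogonality: ⟨u+Au, uh+p⟩ = ⟨uh+Av, uh+p⟩
  have hG := hGal (uh + p) hzhYh
  have hcoe : ((u - uhX : X) : Y) = (u : Y) - uh := rfl
  have hGal2 : (inner ℝ ((u : Y) + A u) (uh + p) : ℝ)
      = inner ℝ (uh + Av) (uh + p) := by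
    have hAsub : A (u - uhX) = A u - Av := by rw [map_sub]
    rw [hcoe, hAsub] at hG
    have : (inner ℝ (((u : Y) + A u) - (uh + Av)) (uh + p) : ℝ) = 0 := by
      rw [show ((u : Y) + A u) - (uh + Av) = ((u : Y) - uh) + (A u - Av) by abel]
      exact hG
    rw [inner_sub_left] at this
    linarith
  -- lower bound
  have hposuh : (0 : ℝ) ≤ inner ℝ Av uh := hpos uhX
  have hAp : (inner ℝ Av p : ℝ) = ‖p‖ ^ 2 := by
    rw [horth p hpYh, real_inner_self_eq_norm_sq]
  have hup : (inner ℝ uh p : ℝ) = inner ℝ Av uh := by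
    rw [real_inner_comm, ← horth uh hvYh, real_inner_comm]
  have hlow : ‖uh‖ ^ 2 + ‖p‖ ^ 2 ≤ (inner ℝ ((u : Y) + A u) (uh + p) : ℝ) := by
    rw [hGal2, inner_add_left, inner_add_right, inner_add_right,
      real_inner_self_eq_norm_sq, hAp, hup]
    linarith
  -- upper bound
  have hub : (inner ℝ ((u : Y) + A u) (uh + p) : ℝ)
      ≤ (‖(u : Y)‖ + ‖A u‖) * (‖uh‖ + ‖p‖) := by
    calc (inner ℝ ((u : Y) + A u) (uh + p) : ℝ)
        ≤ ‖(u : Y) + A u‖ * ‖uh + p‖ := real_inner_le_norm _ _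
      _ ≤ (‖(u : Y)‖ + ‖A u‖) * (‖uh‖ + ‖p‖) :=
          mul_le_mul (norm_add_le _ _) (norm_add_le _ _) (norm_nonneg _)
            (add_nonneg (norm_nonneg _) (norm_nonneg _))
  set N := Real.sqrt (‖uh‖ ^ 2 + ‖p‖ ^ 2) with hN
  set M := Real.sqrt (‖(u : Y)‖ ^ 2 + ‖A u‖ ^ 2) with hM
  have hNnn : 0 ≤ N := Real.sqrt_nonneg _
  have hMnn : 0 ≤ M := Real.sqrt_nonneg _
  have hNsq : N ^ 2 = ‖uh‖ ^ 2 + ‖p‖ ^ 2 := by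
    rw [hN, Real.sq_sqrt (by positivity)]
  have hMsq : M ^ 2 = ‖(u : Y)‖ ^ 2 + ‖A u‖ ^ 2 := by
    rw [hM, Real.sq_sqrt (by positivity)]
  have h1 : ‖uh‖ + ‖p‖ ≤ Real.sqrt 2 * N := by
    have key : (‖uh‖ + ‖p‖) ^ 2 ≤ 2 * (‖uh‖ ^ 2 + ‖p‖ ^ 2) := by
      nlinarith [sq_nonneg (‖uh‖ - ‖p‖)]
    have h4 := Real.sqrt_le_sqrt key
    rwa [Real.sqrt_sq (by positivity), Real.sqrt_mul (by norm_num : (0:ℝ) ≤ 2), ← hN] at h4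
  have h2 : ‖(u : Y)‖ + ‖A u‖ ≤ Real.sqrt 2 * M := by
    have key : (‖(u : Y)‖ + ‖A u‖) ^ 2 ≤ 2 * (‖(u : Y)‖ ^ 2 + ‖A u‖ ^ 2) := by
      nlinarith [sq_nonneg (‖(u : Y)‖ - ‖A u‖)]
    have h4 := Real.sqrt_le_sqrt key
    rwa [Real.sqrt_sq (by positivity), Real.sqrt_mul (by norm_num : (0:ℝ) ≤ 2), ← hM] at h4
  have hkey : N ^ 2 ≤ 2 * M * N := by
    have hs2 : Real.sqrt 2 * Real.sqrt 2 = 2 := Real.mul_self_sqrt (by norm_num)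
    calc N ^ 2 = ‖uh‖ ^ 2 + ‖p‖ ^ 2 := hNsq
      _ ≤ (‖(u : Y)‖ + ‖A u‖) * (‖uh‖ + ‖p‖) := le_trans hlow hub
      _ ≤ (Real.sqrt 2 * M) * (Real.sqrt 2 * N) := by
          apply mul_le_mul h2 h1 (by positivity) (by positivity)
      _ = 2 * M * N := by linear_combination M * N * hs2
  rcases eq_or_lt_of_le hNnn with h | h
  · rw [← h]; positivity
  · have hmul : N * N ≤ 2 * M * N := by rw [← pow_two]; exact hkey
    exact le_of_mul_le_mul_right hmul h
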